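/- If {x_n} and {y_n} are log-convex sequences of nonnegative real numbers, then their binomial convolution z_n = ∑_{k=0}^{n} C(n,k) x_k y_{n-k} is log-convex. -/

import Mathlib

def LogConvex (a : ℕ → ℝ) : Prop := ∀ n : ℕ, a n * a (n + 2) ≥ a (n + 1) ^ 2

private def Z (x y : ℕ → ℝ) (n : ℕ) : ℝ :=
  ∑ k ∈ Finset.range (n + 1), (n.choose k : ℝ) * x k * y (n - k)

private lemma Z_nonneg (x y : ℕ → ℝ) (hx0 : ∀ n, 0 ≤ x n) (hy0 : ∀ n, 0 ≤ y n) (n : ℕ) :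
    0 ≤ Z x y n := by
  refine Finset.sum_nonneg fun k _ => ?_
  have := hx0 k; have := hy0 (n - k); positivity

private lemma Z_succ (x y : ℕ → ℝ) (n : ℕ) :
    Z x y (n + 1) = Z x (fun k => y (k + 1)) n + Z (fun k => x (k + 1)) y n := by
  unfold Z
  rw [Finset.sum_range_succ' (fun k => ((n+1).choose k : ℝ) * x k * y (n + 1 - k))]
  have h1 : ∀ i ∈ Finset.range (n + 1),
      (((n+1).choose (i+1) : ℝ)) * x (i+1) * y (n + 1 - (i+1))
        = (n.choose i : ℝ) * x (i+1) * y (n - i)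
          + (n.choose (i+1) : ℝ) * x (i+1) * y (n - i) := by
    intro i hi
    have : n + 1 - (i + 1) = n - i := by omega
    rw [this, Nat.choose_succ_succ]
    push_cast
    ring
  rw [Finset.sum_congr rfl h1, Finset.sum_add_distrib]
  have h2 : ∑ i ∈ Finset.range (n + 1), (n.choose (i+1) : ℝ) * x (i+1) * y (n - i)
      + ((n+1).choose 0 : ℝ) * x 0 * y (n + 1 - 0)
      = ∑ k ∈ Finset.range (n + 1), (n.choose k : ℝ) * x k * y (n - k + 1) := by
    have h3 : ∑ i ∈ Finset.range (n + 1), (n.choose (i+1) : ℝ) * x (i+1) * y (n - i)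
        = ∑ i ∈ Finset.range (n + 1), (fun k => (n.choose k : ℝ) * x k * y (n + 1 - k)) (i+1) := by
      refine Finset.sum_congr rfl fun i hi => ?_
      simp only []
      congr 2
      omega
    rw [h3]
    have h4 : ((n+1).choose 0 : ℝ) * x 0 * y (n + 1 - 0)
        = (fun k => (n.choose k : ℝ) * x k * y (n + 1 - k)) 0 := by simp
    rw [h4, ← Finset.sum_range_succ' (fun k => (n.choose k : ℝ) * x k * y (n + 1 - k)) (n+1)]
    rw [Finset.sum_range_succ]
    simp only [Nat.choose_succ_self, Nat.cast_zero, zero_mul]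
    rw [add_zero]
    refine Finset.sum_congr rfl fun k hk => ?_
    simp only [Finset.mem_range] at hk
    have : n + 1 - k = (n - k) + 1 := by omega
    rw [this]
  beta_reduce
  rw [← h2]
  ring

private lemma cs_step (a b c a' b' c' : ℝ) (ha : 0 ≤ a) (hc : 0 ≤ c) (ha' : 0 ≤ a')
    (hc' : 0 ≤ c') (hb : 0 ≤ b) (hb' : 0 ≤ b')
    (h1 : b ^ 2 ≤ a * c) (h2 : b' ^ 2 ≤ a' * c') :
    (b + b') ^ 2 ≤ (a + a') * (c + c') := by
  have key : 2 * b * b' ≤ a * c' + a' * c := by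
    have h4 : (2 * b * b') ^ 2 ≤ (a * c' + a' * c) ^ 2 := by
      nlinarith [sq_nonneg (a * c' - a' * c),
        mul_le_mul h1 h2 (sq_nonneg b') (mul_nonneg ha hc)]
    exact le_of_pow_le_pow_left₀ two_ne_zero (by positivity) h4
  nlinarith [h1, h2]

private lemma shift_logConvex {a : ℕ → ℝ} (ha : LogConvex a) : LogConvex (fun k => a (k + 1)) :=
  fun n => by simpa [add_assoc] using ha (n + 1)

private lemma Z_key : ∀ (n : ℕ) (x y : ℕ → ℝ), (∀ k, 0 ≤ x k) → (∀ k, 0 ≤ y k) →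
    LogConvex x → LogConvex y → Z x y (n + 1) ^ 2 ≤ Z x y n * Z x y (n + 2) := by
  intro n
  induction n with
  | zero =>
    intro x y hx0 hy0 hx hy
    have h0 : Z x y 0 = x 0 * y 0 := by simp [Z]
    have h1 : Z x y 1 = x 0 * y 1 + x 1 * y 0 := by
      simp [Z, Finset.sum_range_succ]
    have h2 : Z x y 2 = x 0 * y 2 + 2 * (x 1 * y 1) + x 2 * y 0 := by
      simp [Z, Finset.sum_range_succ]
      ring
    rw [h0, h1, h2]
    nlinarith [mul_nonneg (sq_nonneg (x 0)) (sub_nonneg.mpr (ge_iff_le.mp (hy 0))),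
      mul_nonneg (sq_nonneg (y 0)) (sub_nonneg.mpr (ge_iff_le.mp (hx 0)))]
  | succ n ih =>
    intro x y hx0 hy0 hx hy
    have e1 := Z_succ x y n
    have e2 := Z_succ x y (n + 1)
    have e3 := Z_succ x y (n + 2)
    have hy' : ∀ k, (0:ℝ) ≤ y (k + 1) := fun k => hy0 (k + 1)
    have hx' : ∀ k, (0:ℝ) ≤ x (k + 1) := fun k => hx0 (k + 1)
    have hu := ih x (fun k => y (k + 1)) hx0 hy' hx (shift_logConvex hy)
    have hv := ih (fun k => x (k + 1)) y hx' hy0 (shift_logConvex hx) hy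
    have h2 : n + 1 + 1 = (n + 1) + 1 := rfl
    have h3 : n + 1 + 2 = (n + 2) + 1 := rfl
    rw [h2, e2, h3, e3, e1]
    exact cs_step _ _ _ _ _ _
      (Z_nonneg x _ hx0 hy' n) (Z_nonneg x _ hx0 hy' (n + 2))
      (Z_nonneg _ y hx' hy0 n) (Z_nonneg _ y hx' hy0 (n + 2))
      (Z_nonneg x _ hx0 hy' (n + 1)) (Z_nonneg _ y hx' hy0 (n + 1)) hu hv

theorem logConvex_binomial_convolution (x y : ℕ → ℝ)
    (hx0 : ∀ n, 0 ≤ x n) (hy0 : ∀ n, 0 ≤ y n)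
    (hx : LogConvex x) (hy : LogConvex y) :
    LogConvex (fun n => ∑ k ∈ Finset.range (n + 1), (n.choose k : ℝ) * x k * y (n - k)) := by
  intro n
  show Z x y (n + 1) ^ 2 ≤ Z x y n * Z x y (n + 2)
  exact Z_key n x y hx0 hy0 hx hy
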